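/- Let M = (Q,Σ,Δ,q0,R) be an mtt with Σ and Δ disjoint, and let π be a binary symbol not in Σ ∪ Δ. Then there exists an mtt M' with input alphabet Σ and output alphabet Σ ∪ Δ ∪ {π} such that τ_{OI,M'} = {(s, π(s,t)) | (s,t) ∈ τ_{OI,M}}. Consequently, for all s ∈ T_Σ and t ∈ T_Δ: (s,t) ∈ τ_{OI,M} if and only if π(s,t) ∈ range(τ_{OI,M'}). -/

import Mathlib

namespace MttF

/-- Finite ordered trees over a label type `α`. -/
inductive RTree (α : Type) : Type
  | node : α → List (RTree α) → RTree α

namespace RTree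

variable {α β : Type}

/-- The root label of a tree. -/
def label : RTree α → α
  | node a _ => a

/-- The list of immediate subtrees of a tree. -/
def children : RTree α → List (RTree α)
  | node _ ts => ts

/-- Relabelling of trees. -/
def map (f : α → β) : RTree α → RTree β
  | node a ts => node (f a) (ts.attach.map (fun x => map f x.1))
decreasing_by
  have := List.sizeOf_lt_of_mem x.2
  simp only [node.sizeOf_spec]
  omega

/-- A tree is well-formed with respect to a rank function if every node labeled
by a rank-`k` symbol has exactly `k` children. `T_Σ` is the set of well-formed
trees over `Σ`. -/
inductive Wf (rk : α → ℕ) : RTree α → Prop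
  | node {a : α} {ts : List (RTree α)} :
      ts.length = rk a → (∀ t ∈ ts, Wf rk t) → Wf rk (node a ts)

/-- `Subtree u t` holds iff `u` is a subtree of `t` (rooted at some node of `t`). -/
inductive Subtree : RTree α → RTree α → Prop
  | refl (t : RTree α) : Subtree t t
  | step {u c : RTree α} {a : α} {ts : List (RTree α)} :
      c ∈ ts → Subtree u c → Subtree u (node a ts)

end RTree

/-- Labels for output trees with parameters: trees over `Δ ∪ Y`. -/
inductive OLab (Δ : Type) : Type
  | out (d : Δ)
  | param (i : ℕ)

/-- Labels for right-hand sides of mtt rules: trees over `Δ ∪ (Q × X) ∪ Y`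
(the second component of a call is the index of the input variable `x`). -/
inductive RLab (Δ Q : Type) : Type
  | out (d : Δ)
  | call (q : Q) (x : ℕ)
  | param (i : ℕ)

/-- Labels for "semantic" trees over `Δ ∪ (Q × T_Σ) ∪ Y`. -/
inductive SLab (Γ Δ Q : Type) : Type
  | out (d : Δ)
  | call (q : Q) (s : RTree Γ)
  | param (i : ℕ)

/-- Trees over `Δ ∪ Y`. -/
abbrev OT (Δ : Type) := RTree (OLab Δ)
/-- Right-hand side trees over `Δ ∪ (Q × X) ∪ Y`. -/
abbrev Rhs (Δ Q : Type) := RTree (RLab Δ Q)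
/-- Trees over `Δ ∪ (Q × T_Σ) ∪ Y`. -/
abbrev ST (Γ Δ Q : Type) := RTree (SLab Γ Δ Q)

/-- First-order substitution `x_i := ss_i` on a label of a right-hand side
(indices are 0-based; for well-formed rules the index is always in range). -/
def RLab.subst {Γ Δ Q : Type} (ss : List (RTree Γ)) : RLab Δ Q → SLab Γ Δ Q
  | .out d => .out d
  | .param i => .param i
  | .call q x =>
    match ss[x]? with
    | some s => .call q s
    | none => .param x

/-- `r[x_1/s_1, …, x_k/s_k]`. -/
def substX {Γ Δ Q : Type} (ss : List (RTree Γ)) (r : Rhs Δ Q) : ST Γ Δ Q :=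
  r.map (RLab.subst ss)

/-- Second-order (parameter) substitution `t[y_1/ts_1, …, y_n/ts_n]`
(`y` indices are 0-based). -/
def substY {Δ : Type} (ts : List (OT Δ)) : OT Δ → OT Δ
  | .node (.param i) _ => ts.getD i (.node (.param i) [])
  | .node (.out d) us => .node (.out d) (us.attach.map (fun x => substY ts x.1))
decreasing_by
  have := List.sizeOf_lt_of_mem x.2
  simp only [RTree.node.sizeOf_spec]
  omega

/-- The embedding of `T_Δ` into the trees over `Δ ∪ Y`. -/
def embed {Δ : Type} (t : RTree Δ) : OT Δ := t.map OLab.out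

variable {Γ Δ Q : Type}

/-- IO (call-by-value, inside-out) semantics: `SemIO rsel u t` holds iff
`t ∈ ⟦u⟧_IO`.  The rules of the transducer are given by a selector
`rsel q σ ss`: the set of right-hand sides of the `⟨q,σ⟩`-rules that are
applicable when the children of the current input node are `ss` (for a plain
mtt this does not depend on `ss`, cf. `plainSel`). -/
inductive SemIO (rsel : Q → Γ → List (RTree Γ) → Set (Rhs Δ Q)) :
    ST Γ Δ Q → OT Δ → Prop
  | param (i : ℕ) :
      SemIO rsel (.node (.param i) []) (.node (.param i) [])
  | out {d : Δ} {us : List (ST Γ Δ Q)} {ts : List (OT Δ)}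
      (hlen : ts.length = us.length)
      (h : ∀ i : Fin us.length, SemIO rsel (us.get i) (ts.get (i.cast hlen.symm))) :
      SemIO rsel (.node (.out d) us) (.node (.out d) ts)
  | call {q : Q} {σ : Γ} {ss : List (RTree Γ)} {us : List (ST Γ Δ Q)}
      {r : Rhs Δ Q} {t₀ : OT Δ} {ts : List (OT Δ)}
      (hr : r ∈ rsel q σ ss)
      (h₀ : SemIO rsel (substX ss r) t₀)
      (hlen : ts.length = us.length)
      (h : ∀ i : Fin us.length, SemIO rsel (us.get i) (ts.get (i.cast hlen.symm))) :
      SemIO rsel (.node (.call q (.node σ ss)) us) (substY ts t₀)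

mutual
/-- OI (call-by-name, outside-in) semantics: `SemOI rsel u t` holds iff
`t ∈ ⟦u⟧_OI`. -/
inductive SemOI (rsel : Q → Γ → List (RTree Γ) → Set (Rhs Δ Q)) :
    ST Γ Δ Q → OT Δ → Prop
  | param (i : ℕ) :
      SemOI rsel (.node (.param i) []) (.node (.param i) [])
  | out {d : Δ} {us : List (ST Γ Δ Q)} {ts : List (OT Δ)}
      (hlen : ts.length = us.length)
      (h : ∀ i : Fin us.length, SemOI rsel (us.get i) (ts.get (i.cast hlen.symm))) :
      SemOI rsel (.node (.out d) us) (.node (.out d) ts)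
  | call {q : Q} {σ : Γ} {ss : List (RTree Γ)} {us : List (ST Γ Δ Q)}
      {r : Rhs Δ Q} {t₀ : OT Δ} {t : OT Δ}
      (hr : r ∈ rsel q σ ss)
      (h₀ : SemOI rsel (substX ss r) t₀)
      (hs : OISub rsel us t₀ t) :
      SemOI rsel (.node (.call q (.node σ ss)) us) t

/-- OI-substitution: `OISub rsel us t₀ t` holds iff `t ∈ (t₀ ←_OI (⟦us_1⟧_OI, …, ⟦us_n⟧_OI))`,
i.e. `t` is obtained from `t₀` by independently replacing every occurrence of a parameter
`y_i` by some member of `⟦us_i⟧_OI`. -/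
inductive OISub (rsel : Q → Γ → List (RTree Γ) → Set (Rhs Δ Q)) :
    List (ST Γ Δ Q) → OT Δ → OT Δ → Prop
  | param {us : List (ST Γ Δ Q)} {i : ℕ} {t : OT Δ}
      (h : i < us.length) (hsem : SemOI rsel (us.get ⟨i, h⟩) t) :
      OISub rsel us (.node (.param i) []) t
  | out {us : List (ST Γ Δ Q)} {d : Δ} {ts ts' : List (OT Δ)}
      (hlen : ts'.length = ts.length)
      (h : ∀ i : Fin ts.length, OISub rsel us (ts.get i) (ts'.get (i.cast hlen.symm))) :
      OISub rsel us (.node (.out d) ts) (.node (.out d) ts')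
end

/-- The rule selector of a plain mtt: the applicable rules do not depend on the
child subtrees of the current input node. -/
def plainSel (rules : Q → Γ → Set (Rhs Δ Q)) :
    Q → Γ → List (RTree Γ) → Set (Rhs Δ Q) :=
  fun q σ _ => rules q σ

/-- The translation `τ_{IO,M} ⊆ T_Σ × T_Δ` realized in IO mode. -/
def tauIO (rankΓ : Γ → ℕ) (rankΔ : Δ → ℕ)
    (rsel : Q → Γ → List (RTree Γ) → Set (Rhs Δ Q)) (q₀ : Q) :
    Set (RTree Γ × RTree Δ) :=
  {p | p.1.Wf rankΓ ∧ p.2.Wf rankΔ ∧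
       SemIO rsel (.node (.call q₀ p.1) []) (embed p.2)}

/-- The translation `τ_{OI,M} ⊆ T_Σ × T_Δ` realized in OI mode. -/
def tauOI (rankΓ : Γ → ℕ) (rankΔ : Δ → ℕ)
    (rsel : Q → Γ → List (RTree Γ) → Set (Rhs Δ Q)) (q₀ : Q) :
    Set (RTree Γ × RTree Δ) :=
  {p | p.1.Wf rankΓ ∧ p.2.Wf rankΔ ∧
       SemOI rsel (.node (.call q₀ p.1) []) (embed p.2)}

/-- Well-formedness of a right-hand side of a rule of an mtt whose current
input symbol has rank `k` and whose current state has rank `m`: output symbols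
have the correct number of children, state calls `⟨q', x_i⟩` have `rank q'`
children and `i < k`, and parameters `y_j` satisfy `j < m`. -/
inductive RhsWf (rankΔ : Δ → ℕ) (rankQ : Q → ℕ) (k m : ℕ) : Rhs Δ Q → Prop
  | out {d : Δ} {ts : List (Rhs Δ Q)}
      (hlen : ts.length = rankΔ d) (h : ∀ t ∈ ts, RhsWf rankΔ rankQ k m t) :
      RhsWf rankΔ rankQ k m (.node (.out d) ts)
  | call {q : Q} {x : ℕ} {ts : List (Rhs Δ Q)}
      (hx : x < k) (hlen : ts.length = rankQ q)
      (h : ∀ t ∈ ts, RhsWf rankΔ rankQ k m t) :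
      RhsWf rankΔ rankQ k m (.node (.call q x) ts)
  | param {i : ℕ} (hi : i < m) : RhsWf rankΔ rankQ k m (.node (.param i) [])

/-- Well-formedness of a tree over `Δ ∪ (Q × T_Σ) ∪ Y`. -/
inductive STWf (rankΓ : Γ → ℕ) (rankΔ : Δ → ℕ) (rankQ : Q → ℕ) : ST Γ Δ Q → Prop
  | out {d : Δ} {ts : List (ST Γ Δ Q)}
      (hlen : ts.length = rankΔ d) (h : ∀ t ∈ ts, STWf rankΓ rankΔ rankQ t) :
      STWf rankΓ rankΔ rankQ (.node (.out d) ts)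
  | call {q : Q} {s : RTree Γ} {ts : List (ST Γ Δ Q)}
      (hs : s.Wf rankΓ) (hlen : ts.length = rankQ q)
      (h : ∀ t ∈ ts, STWf rankΓ rankΔ rankQ t) :
      STWf rankΓ rankΔ rankQ (.node (.call q s) ts)
  | param (i : ℕ) : STWf rankΓ rankΔ rankQ (.node (.param i) [])

/-- A tree over `Δ ∪ (Q × T_Σ) ∪ Y` is parameter-free if no `y_i` occurs in it. -/
inductive NoParam : ST Γ Δ Q → Prop
  | node {l : SLab Γ Δ Q} {ts : List (ST Γ Δ Q)}
      (hl : ∀ i : ℕ, l ≠ .param i) (h : ∀ t ∈ ts, NoParam t) :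
      NoParam (.node l ts)

/-- A macro tree transducer `M = (Q, Σ, Δ, q₀, R)`.  The alphabets `Γ` (input),
`Δ` (output) and the set `Q` of states are ranked; `q₀` has rank `0`; `rules q σ`
is the (finite) set `R_{q,σ}` of right-hand sides of the `⟨q,σ⟩`-rules, and every
right-hand side is a well-formed tree over `Δ ∪ (Q × X_k) ∪ Y_m`. -/
structure MTT (Γ Δ Q : Type) where
  rankΓ : Γ → ℕ
  rankΔ : Δ → ℕ
  rankQ : Q → ℕ
  q₀ : Q
  q₀_rank : rankQ q₀ = 0
  rules : Q → Γ → Set (Rhs Δ Q)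
  rules_fin : ∀ q σ, (rules q σ).Finite
  rules_wf : ∀ q σ, ∀ r ∈ rules q σ, RhsWf rankΔ rankQ (rankΓ σ) (rankQ q) r

/-- The rule selector of a plain mtt. -/
def MTT.sel (M : MTT Γ Δ Q) : Q → Γ → List (RTree Γ) → Set (Rhs Δ Q) :=
  plainSel M.rules

end MttF

namespace MttF

section Aux

variable {α β γ' : Type}

theorem RTree.strongInd {P : RTree α → Prop}
    (h : ∀ a ts, (∀ t ∈ ts, P t) → P (RTree.node a ts)) : ∀ t, P t
  | .node a ts => h a ts (fun t ht => RTree.strongInd h t)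
decreasing_by
  have := List.sizeOf_lt_of_mem ht
  simp only [RTree.node.sizeOf_spec]; omega

theorem RTree.map_node (f : α → β) (a : α) (ts : List (RTree α)) :
    RTree.map f (.node a ts) = .node (f a) (ts.map (RTree.map f)) := by
  rw [RTree.map]
  congr 1
  simp [List.attach_map_val]

theorem RTree.map_map (f : α → β) (g : β → γ') : ∀ t : RTree α,
    (t.map f).map g = t.map (g ∘ f) := by
  apply RTree.strongInd
  intro a ts ih
  simp only [RTree.map_node, List.map_map]
  congr 1
  exact List.map_congr_left (fun t ht => ih t ht)

theorem RTree.map_id : ∀ t : RTree α, t.map id = t := by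
  apply RTree.strongInd
  intro a ts ih
  simp only [RTree.map_node, id]
  congr 1
  exact (List.map_congr_left ih).trans (List.map_id _)

theorem RTree.map_injective {f : α → β} (hf : Function.Injective f) :
    Function.Injective (RTree.map f) := by
  intro t
  induction t using RTree.strongInd with
  | h a ts ih =>
    intro t' h
    obtain ⟨b, us⟩ := t'
    rw [RTree.map_node, RTree.map_node, RTree.node.injEq] at h
    obtain ⟨h1, h2⟩ := h
    refine (RTree.node.injEq ..).mpr ⟨hf h1, ?_⟩
    clear h1
    induction ts generalizing us with
    | nil =>
      cases us with
      | nil => rfl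
      | cons => simp at h2
    | cons x xs ihl =>
      cases us with
      | nil => simp at h2
      | cons y ys =>
        simp only [List.map_cons, List.cons.injEq] at h2
        exact congrArg₂ _ (ih x (List.mem_cons_self ..) h2.1)
          (ihl (fun t ht => ih t (List.mem_cons_of_mem _ ht)) _ h2.2)

theorem RTree.wf_map {f : α → β} {rk : α → ℕ} {rk' : β → ℕ}
    (hrk : ∀ a, rk' (f a) = rk a) {t : RTree α} (h : t.Wf rk) : (t.map f).Wf rk' := by
  induction h with
  | @node a ts hlen hts ih =>
    rw [RTree.map_node]
    exact .node (by simp [hrk, hlen]) (by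
      intro u hu
      obtain ⟨v, hv, rfl⟩ := List.mem_map.1 hu
      exact ih v hv)

theorem RTree.wf_of_map {f : α → β} {rk : α → ℕ} {rk' : β → ℕ}
    (hrk : ∀ a, rk' (f a) = rk a) {t : RTree α} (h : (t.map f).Wf rk') : t.Wf rk := by
  induction t using RTree.strongInd with
  | h a ts ih =>
    rw [RTree.map_node] at h
    cases h with
    | node hlen hts =>
      exact .node (by simpa [hrk] using hlen)
        (fun u hu => ih u hu (hts _ (List.mem_map_of_mem hu)))

end Aux

section Pairing

variable {Γ Δ Q : Type}

/-- Relabelling of rhs labels into the paired transducer. -/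
def rlab' : RLab Δ Q → RLab (Γ ⊕ Δ ⊕ Unit) (Q ⊕ Bool)
  | .out d => .out (Sum.inr (Sum.inl d))
  | .call q x => .call (Sum.inl q) x
  | .param i => .param i

def olab' : OLab Δ → OLab (Γ ⊕ Δ ⊕ Unit)
  | .out d => .out (Sum.inr (Sum.inl d))
  | .param i => .param i

def ounlab' : OLab (Γ ⊕ Δ ⊕ Unit) → OLab Δ
  | .out (Sum.inr (Sum.inl d)) => .out d
  | .out _ => .param 0
  | .param i => .param i

def slab' : SLab Γ Δ Q → SLab Γ (Γ ⊕ Δ ⊕ Unit) (Q ⊕ Bool)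
  | .out d => .out (Sum.inr (Sum.inl d))
  | .call q s => .call (Sum.inl q) s
  | .param i => .param i

theorem ounlab'_olab' (l : OLab Δ) : ounlab' (Γ := Γ) (olab' l) = l := by
  cases l <;> rfl

theorem unmap_mapO (t : OT Δ) :
    (t.map (olab' (Γ := Γ))).map ounlab' = t := by
  rw [RTree.map_map]
  have : (ounlab' (Γ := Γ) (Δ := Δ)) ∘ (olab' (Γ := Γ)) = id := funext ounlab'_olab'
  rw [this, RTree.map_id]

/-- The copy rule right-hand side for an input symbol of rank `k`. -/
def copyRhs (Δ Q : Type) (σ : Γ) (k : ℕ) : Rhs (Γ ⊕ Δ ⊕ Unit) (Q ⊕ Bool) :=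
  .node (.out (Sum.inl σ))
    ((List.range k).map fun i => .node (.call (Sum.inr true) i) [])

/-- The paired transducer `M'`. -/
def MTT.pair (M : MTT Γ Δ Q) : MTT Γ (Γ ⊕ Δ ⊕ Unit) (Q ⊕ Bool) where
  rankΓ := M.rankΓ
  rankΔ := Sum.elim M.rankΓ (Sum.elim M.rankΔ (fun _ => 2))
  rankQ := Sum.elim M.rankQ (fun _ => 0)
  q₀ := Sum.inr false
  q₀_rank := rfl
  rules q σ :=
    match q with
    | Sum.inl q => (RTree.map rlab') '' M.rules q σ
    | Sum.inr true => {copyRhs Δ Q σ (M.rankΓ σ)}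
    | Sum.inr false =>
        (fun r => RTree.node (.out (Sum.inr (Sum.inr ())))
          [copyRhs Δ Q σ (M.rankΓ σ), r.map rlab']) '' M.rules M.q₀ σ
  rules_fin q σ := by
    match q with
    | Sum.inl q => exact (M.rules_fin q σ).image _
    | Sum.inr true => exact Set.finite_singleton _
    | Sum.inr false => exact (M.rules_fin M.q₀ σ).image _
  rules_wf q σ := by
    have hcopy : ∀ m, RhsWf (Sum.elim M.rankΓ (Sum.elim M.rankΔ (fun _ => 2)))
        (Sum.elim M.rankQ (fun _ => 0)) (M.rankΓ σ) m (copyRhs Δ Q σ (M.rankΓ σ)) := by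
      intro m
      refine RhsWf.out (by simp [copyRhs]) ?_
      intro t ht
      simp only [copyRhs, List.mem_map, List.mem_range] at ht
      obtain ⟨i, hi, rfl⟩ := ht
      exact RhsWf.call hi rfl (by simp)
    have hmap : ∀ {k m : ℕ} {r : Rhs Δ Q}, RhsWf M.rankΔ M.rankQ k m r →
        RhsWf (Sum.elim M.rankΓ (Sum.elim M.rankΔ (fun _ => 2)))
          (Sum.elim M.rankQ (fun _ => 0)) k m (r.map rlab') := by
      intro k m r h
      induction h with
      | @out d ts hlen hts ih =>
        rw [RTree.map_node]
        refine RhsWf.out (by simpa [rlab'] using hlen) ?_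
        intro t ht
        obtain ⟨v, hv, rfl⟩ := List.mem_map.1 ht
        exact ih v hv
      | @call q x ts hx hlen hts ih =>
        rw [RTree.map_node]
        refine RhsWf.call hx (by simpa [rlab'] using hlen) ?_
        intro t ht
        obtain ⟨v, hv, rfl⟩ := List.mem_map.1 ht
        exact ih v hv
      | @param i hi =>
        rw [RTree.map_node]
        exact RhsWf.param hi
    match q with
    | Sum.inl q =>
      rintro r ⟨r₀, hr₀, rfl⟩
      exact hmap (M.rules_wf q σ r₀ hr₀)
    | Sum.inr true =>
      rintro r hr
      cases hr
      exact hcopy 0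
    | Sum.inr false =>
      rintro r ⟨r₀, hr₀, rfl⟩
      refine RhsWf.out (by simp) ?_
      intro t ht
      simp only [List.mem_cons, List.not_mem_nil, or_false] at ht
      rcases ht with rfl | rfl
      · exact hcopy 0
      · have := hmap (M.rules_wf M.q₀ σ r₀ hr₀)
        rwa [M.q₀_rank] at this

theorem sel_apply (M : MTT Γ Δ Q) (q : Q) (σ : Γ) (ss : List (RTree Γ)) :
    M.sel q σ ss = M.rules q σ := rfl

theorem pair_sel_inl (M : MTT Γ Δ Q) (q : Q) (σ : Γ) (ss : List (RTree Γ)) :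
    M.pair.sel (Sum.inl q) σ ss = (RTree.map rlab') '' M.rules q σ := rfl

theorem pair_sel_copy (M : MTT Γ Δ Q) (σ : Γ) (ss : List (RTree Γ)) :
    M.pair.sel (Sum.inr true) σ ss = {copyRhs Δ Q σ (M.rankΓ σ)} := rfl

theorem pair_sel_init (M : MTT Γ Δ Q) (σ : Γ) (ss : List (RTree Γ)) :
    M.pair.sel (Sum.inr false) σ ss =
      (fun r => RTree.node (.out (Sum.inr (Sum.inr ())))
        [copyRhs Δ Q σ (M.rankΓ σ), r.map rlab']) '' M.rules M.q₀ σ := rfl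

/-- Trees over `Δ ∪ Y` containing no parameters. -/
inductive IsOut : OT Δ → Prop
  | node {d : Δ} {ts : List (OT Δ)} (h : ∀ t ∈ ts, IsOut t) :
      IsOut (.node (.out d) ts)

theorem embed_node (a : Δ) (ts : List (RTree Δ)) :
    embed (.node a ts) = .node (.out a) (ts.map embed) := by
  simp only [embed, RTree.map_node]
  rfl

theorem isOut_embed : ∀ t : RTree Δ, IsOut (embed t) := by
  apply RTree.strongInd
  intro a ts ih
  rw [embed_node]
  exact IsOut.node (by
    intro t ht
    obtain ⟨v, hv, rfl⟩ := List.mem_map.1 ht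
    exact ih v hv)

theorem oisub_of_isOut {Q' : Type} (rsel : Q' → Γ → List (RTree Γ) → Set (Rhs Δ Q'))
    (us : List (ST Γ Δ Q')) {t : OT Δ} (h : IsOut t) : OISub rsel us t t := by
  induction h with
  | @node d ts hts ih =>
    exact OISub.out rfl (fun i => ih _ (List.get_mem ts ⟨i.1, i.2⟩))

theorem eq_of_oisub_isOut {Q' : Type} {rsel : Q' → Γ → List (RTree Γ) → Set (Rhs Δ Q')}
    {us : List (ST Γ Δ Q')} {t₀ t : OT Δ} (h : OISub rsel us t₀ t) (ho : IsOut t₀) :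
    t = t₀ := by
  refine OISub.rec (motive_1 := fun _ _ _ => True)
    (motive_2 := fun us t₀ t _ => IsOut t₀ → t = t₀) ?_ ?_ ?_ ?_ ?_ h ho
  · intro _; trivial
  · intros; trivial
  · intros; trivial
  · intro us i t hlt hsem _ hiso
    cases hiso
  · intro us d ts ts' hlen hsub ih hiso
    cases hiso with
    | node hts =>
      congr 1
      refine List.ext_get hlen ?_
      intro n h1 h2
      exact ih ⟨n, h2⟩ (hts _ (List.get_mem ts ⟨n, h2⟩))

theorem substX_node (ss : List (RTree Γ)) (l : RLab Δ Q) (ts : List (Rhs Δ Q)) :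
    substX ss (.node l ts) = .node (RLab.subst ss l) (ts.map (substX ss)) := by
  simp only [substX, RTree.map_node]
  rfl

theorem substX_copyRhs (σ : Γ) {k : ℕ} {ss : List (RTree Γ)} (hlen : ss.length = k) :
    substX ss (copyRhs Δ Q σ k) =
      .node (.out (Sum.inl σ))
        (ss.map fun s => .node (.call (Sum.inr true) s) []) := by
  subst hlen
  rw [copyRhs, substX_node]
  congr 1
  rw [List.map_map]
  refine List.ext_get (by simp) ?_
  intro n h1 h2
  simp only [List.get_eq_getElem, List.getElem_map, List.getElem_range, Function.comp_apply]
  rw [substX_node]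
  simp only [List.map_nil]
  congr 1
  simp only [RLab.subst]
  rw [List.getElem?_eq_getElem (by simpa using h1)]

theorem substX_rlab (ss : List (RTree Γ)) (r : Rhs Δ Q) :
    substX ss (r.map (rlab' (Γ := Γ))) = (substX ss r).map slab' := by
  simp only [substX, RTree.map_map]
  congr 1
  funext l
  cases l with
  | out d => rfl
  | param i => rfl
  | call q x =>
    simp only [Function.comp_apply, rlab', RLab.subst]
    cases h : ss[x]? <;> simp [h, slab']

theorem embed_map_inl (σ : Γ) (ss : List (RTree Γ)) :
    embed (Δ := Γ ⊕ Δ ⊕ Unit) ((RTree.node σ ss).map Sum.inl) =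
      .node (.out (Sum.inl σ)) (ss.map fun x => embed (x.map Sum.inl)) := by
  rw [RTree.map_node, embed_node, List.map_map]
  rfl

theorem embed_olab (t : RTree Δ) :
    (embed t).map (olab' (Γ := Γ)) = embed (t.map (fun d => Sum.inr (Sum.inl d))) := by
  simp only [embed, RTree.map_map]
  congr 1

theorem sem_copy_subst (M : MTT Γ Δ Q) {σ : Γ} {ss : List (RTree Γ)}
    (hlen : ss.length = M.rankΓ σ) (hwf : ∀ x ∈ ss, x.Wf M.rankΓ)
    (ih : ∀ x ∈ ss, ∀ t, SemOI M.pair.sel (.node (.call (Sum.inr true) x) []) t ↔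
        t = embed (x.map Sum.inl)) :
    ∀ t, SemOI M.pair.sel (substX ss (copyRhs Δ Q σ (M.rankΓ σ))) t ↔
      t = .node (.out (Sum.inl σ)) (ss.map fun x => embed (x.map Sum.inl)) := by
  intro t
  rw [substX_copyRhs σ hlen]
  constructor
  · intro h
    cases h with
    | @out d us ts hlen2 hsem =>
      congr 1
      refine List.ext_get (by simpa using hlen2) ?_
      intro n h1 h2
      have := hsem (Fin.cast (by simpa using hlen2) ⟨n, h1⟩)
      simp only [List.get_eq_getElem, List.getElem_map, Fin.coe_cast] at this ⊢
      exact ((ih _ (List.getElem_mem _) _).1 this)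
  · rintro rfl
    refine SemOI.out (by simp) ?_
    intro i
    simp only [List.get_eq_getElem, List.getElem_map, Fin.coe_cast]
    exact (ih _ (List.getElem_mem _) _).2 rfl

theorem sem_copy (M : MTT Γ Δ Q) :
    ∀ {s : RTree Γ}, s.Wf M.rankΓ → ∀ t,
      SemOI M.pair.sel (.node (.call (Sum.inr true) s) []) t ↔
        t = embed (s.map Sum.inl) := by
  intro s
  induction s using RTree.strongInd with
  | h σ ss ih =>
    intro hwf t
    cases hwf with
    | node hlen hts =>
      have key := sem_copy_subst M hlen hts (fun x hx => ih x hx (hts x hx))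
      constructor
      · intro h
        cases h with
        | @call q' σ' ss' us r t₀ t hr h₀ hsub =>
          rw [pair_sel_copy, Set.mem_singleton_iff] at hr
          subst hr
          have ht₀ := (key _).1 h₀
          subst ht₀
          have hiso : IsOut (RTree.node (OLab.out (Sum.inl σ))
              (ss.map fun x => embed (Δ := Γ ⊕ Δ ⊕ Unit) (x.map Sum.inl))) := by
            refine IsOut.node ?_
            intro u hu
            obtain ⟨v, hv, rfl⟩ := List.mem_map.1 hu
            exact isOut_embed _
          rw [eq_of_oisub_isOut hsub hiso, embed_map_inl]
      · rintro rfl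
        refine SemOI.call (r := copyRhs Δ Q σ (M.rankΓ σ)) rfl ((key _).2 rfl) ?_
        rw [embed_map_inl]
        refine oisub_of_isOut _ _ (IsOut.node ?_)
        intro u hu
        obtain ⟨v, hv, rfl⟩ := List.mem_map.1 hu
        exact isOut_embed _

theorem map_eq_node {α β : Type} {f : α → β} {u : RTree α} {b : β} {ts' : List (RTree β)}
    (h : RTree.map f u = .node b ts') :
    ∃ a ts, u = .node a ts ∧ b = f a ∧ ts' = ts.map (RTree.map f) := by
  obtain ⟨a, ts⟩ := u
  rw [RTree.map_node] at h
  injection h with h1 h2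
  exact ⟨a, ts, rfl, h1.symm, h2.symm⟩

theorem slab'_eq_param {l : SLab Γ Δ Q} {i : ℕ} (h : slab' l = .param i) :
    l = .param i := by
  cases l <;> simp_all [slab']

theorem slab'_eq_out {l : SLab Γ Δ Q} {d' : Γ ⊕ Δ ⊕ Unit} (h : slab' l = .out d') :
    ∃ d, l = .out d ∧ d' = Sum.inr (Sum.inl d) := by
  cases l <;> simp_all [slab']

theorem slab'_eq_call {l : SLab Γ Δ Q} {q' : Q ⊕ Bool} {s : RTree Γ}
    (h : slab' l = .call q' s) : ∃ q, q' = Sum.inl q ∧ l = .call q s := by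
  cases l <;> simp_all [slab']

theorem olab'_eq_param {l : OLab Δ} {i : ℕ} (h : olab' (Γ := Γ) l = .param i) :
    l = .param i := by
  cases l <;> simp_all [olab']

theorem olab'_eq_out {l : OLab Δ} {d' : Γ ⊕ Δ ⊕ Unit} (h : olab' l = .out d') :
    ∃ d, l = .out d ∧ d' = Sum.inr (Sum.inl d) := by
  cases l <;> simp_all [olab']

theorem list_unmap {A B : Type} (f : A → B) (g : B → A) (hg : ∀ a, g (f a) = a)
    (ts' : List B) (P : ℕ → A → Prop)
    (h : ∀ (i : ℕ) (hi : i < ts'.length), ∃ t, ts'[i] = f t ∧ P i t) :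
    ∃ Ts : List A, ts' = Ts.map f ∧ Ts.length = ts'.length ∧
      ∀ (i : ℕ) (hi : i < Ts.length), P i Ts[i] := by
  refine ⟨ts'.map g, ?_, by simp, ?_⟩
  · refine List.ext_get (by simp) ?_
    intro n h1 h2
    obtain ⟨t, ht, -⟩ := h n h1
    simp only [List.get_eq_getElem, List.getElem_map]
    rw [ht, hg]
  · intro i hi
    simp only [List.length_map] at hi
    obtain ⟨t, ht, hp⟩ := h i hi
    simpa [List.getElem_map, ht, hg] using hp

theorem sem_relabel_fwd (M : MTT Γ Δ Q) {u : ST Γ Δ Q} {t : OT Δ}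
    (h : SemOI M.sel u t) :
    SemOI M.pair.sel (u.map slab') (t.map olab') := by
  refine SemOI.rec (rsel := M.sel)
    (motive_1 := fun u t _ => SemOI M.pair.sel (u.map slab') (t.map olab'))
    (motive_2 := fun us t₀ t _ =>
      OISub M.pair.sel (us.map (RTree.map slab')) (t₀.map olab') (t.map olab'))
    ?_ ?_ ?_ ?_ ?_ h
  · intro i
    rw [RTree.map_node, RTree.map_node]
    simp only [List.map_nil]
    exact SemOI.param i
  · intro d us ts hlen hsem ih
    rw [RTree.map_node, RTree.map_node]
    refine SemOI.out (by simp [hlen]) ?_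
    intro i
    have := ih (Fin.cast (by simp) i)
    simp only [List.get_eq_getElem, List.getElem_map, Fin.coe_cast] at this ⊢
    exact this
  · intro q σ ss us r t₀ t hr h₀ hs ih₀ ihs
    rw [RTree.map_node]
    refine SemOI.call (r := r.map rlab') ?_ ?_ ihs
    · rw [pair_sel_inl]
      exact ⟨r, hr, rfl⟩
    · rw [substX_rlab]
      exact ih₀
  · intro us i t hlt hsem ih
    rw [RTree.map_node]
    simp only [List.map_nil]
    refine OISub.param (h := by simpa using hlt) ?_
    simpa only [List.get_eq_getElem, List.getElem_map] using ih
  · intro us d ts ts' hlen hsub ih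
    rw [RTree.map_node, RTree.map_node]
    refine OISub.out (by simp [hlen]) ?_
    intro i
    have := ih (Fin.cast (by simp) i)
    simp only [List.get_eq_getElem, List.getElem_map, Fin.coe_cast] at this ⊢
    exact this

theorem oisub_relabel_fwd (M : MTT Γ Δ Q) {us : List (ST Γ Δ Q)} {t₀ t : OT Δ}
    (h : OISub M.sel us t₀ t) :
    OISub M.pair.sel (us.map (RTree.map slab')) (t₀.map olab') (t.map olab') := by
  refine OISub.rec (rsel := M.sel)
    (motive_1 := fun u t _ => SemOI M.pair.sel (u.map slab') (t.map olab'))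
    (motive_2 := fun us t₀ t _ =>
      OISub M.pair.sel (us.map (RTree.map slab')) (t₀.map olab') (t.map olab'))
    ?_ ?_ ?_ ?_ ?_ h
  · intro i
    rw [RTree.map_node, RTree.map_node]
    simp only [List.map_nil]
    exact SemOI.param i
  · intro d us ts hlen hsem ih
    rw [RTree.map_node, RTree.map_node]
    refine SemOI.out (by simp [hlen]) ?_
    intro i
    have := ih (Fin.cast (by simp) i)
    simp only [List.get_eq_getElem, List.getElem_map, Fin.coe_cast] at this ⊢
    exact this
  · intro q σ ss us r t₀ t hr h₀ hs ih₀ ihs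
    rw [RTree.map_node]
    refine SemOI.call (r := r.map rlab') ?_ ?_ ihs
    · rw [pair_sel_inl]
      exact ⟨r, hr, rfl⟩
    · rw [substX_rlab]
      exact ih₀
  · intro us i t hlt hsem ih
    rw [RTree.map_node]
    simp only [List.map_nil]
    refine OISub.param (h := by simpa using hlt) ?_
    simpa only [List.get_eq_getElem, List.getElem_map] using ih
  · intro us d ts ts' hlen hsub ih
    rw [RTree.map_node, RTree.map_node]
    refine OISub.out (by simp [hlen]) ?_
    intro i
    have := ih (Fin.cast (by simp) i)
    simp only [List.get_eq_getElem, List.getElem_map, Fin.coe_cast] at this ⊢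
    exact this

section Bwd

variable (M : MTT Γ Δ Q)

private def BwdMot1 : (u' : ST Γ (Γ ⊕ Δ ⊕ Unit) (Q ⊕ Bool)) →
    (t' : OT (Γ ⊕ Δ ⊕ Unit)) → SemOI M.pair.sel u' t' → Prop :=
  fun u' t' _ => ∀ u : ST Γ Δ Q, u' = u.map slab' →
    ∃ t, t' = t.map olab' ∧ SemOI M.sel u t

private def BwdMot2 : (us' : List (ST Γ (Γ ⊕ Δ ⊕ Unit) (Q ⊕ Bool))) →
    (t₀' t' : OT (Γ ⊕ Δ ⊕ Unit)) → OISub M.pair.sel us' t₀' t' → Prop :=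
  fun us' t₀' t' _ => ∀ (us : List (ST Γ Δ Q)) (t₀ : OT Δ),
    us' = us.map (RTree.map slab') → t₀' = t₀.map olab' →
    ∃ t, t' = t.map olab' ∧ OISub M.sel us t₀ t

end Bwd

section Bwd2

variable {M : MTT Γ Δ Q}

private theorem bwd_prem1 : ∀ i : ℕ, BwdMot1 M (.node (.param i) [])
    (.node (.param i) []) (SemOI.param i) := by
  intro i u hu
  obtain ⟨l, ts, rfl, hl, hts⟩ := map_eq_node hu.symm
  obtain rfl := slab'_eq_param hl.symm
  obtain rfl : ts = [] := by simpa using hts.symm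
  refine ⟨.node (.param i) [], ?_, SemOI.param i⟩
  rw [RTree.map_node]
  rfl

set_option maxHeartbeats 800000 in
private theorem bwd_prem2 : ∀ {d : Γ ⊕ Δ ⊕ Unit}
    {us' : List (ST Γ (Γ ⊕ Δ ⊕ Unit) (Q ⊕ Bool))} {ts' : List (OT (Γ ⊕ Δ ⊕ Unit))}
    (hlen : ts'.length = us'.length)
    (hsem : ∀ i : Fin us'.length, SemOI M.pair.sel (us'.get i)
      (ts'.get (Fin.cast hlen.symm i))),
    (∀ i : Fin us'.length, BwdMot1 M (us'.get i) (ts'.get (Fin.cast hlen.symm i))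
      (hsem i)) →
    BwdMot1 M (.node (.out d) us') (.node (.out d) ts')
      (SemOI.out hlen hsem) := by
  intro d' us' ts' hlen hsem ih u hu
  obtain ⟨l, us, rfl, hl, rfl⟩ := map_eq_node hu.symm
  obtain ⟨d, rfl, rfl⟩ := slab'_eq_out hl.symm
  have hP : ∀ (i : ℕ) (hi : i < ts'.length), ∃ t, ts'[i] = t.map olab' ∧
      (∀ hj : i < us.length, SemOI M.sel us[i] t) := by
    intro i hi
    have hi' : i < us.length := by
      simp only [List.length_map] at hlen
      omega
    have := ih (Fin.cast (by simp) ⟨i, hi'⟩)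
    simp only [BwdMot1, List.get_eq_getElem, List.getElem_map, Fin.coe_cast] at this
    obtain ⟨t, ht, hs⟩ := this _ rfl
    exact ⟨t, ht, fun _ => hs⟩
  obtain ⟨Ts, rfl, hTlen, hTs⟩ := list_unmap _ (RTree.map ounlab') unmap_mapO ts' _ hP
  have hlu : Ts.length = us.length := by
    simp only [List.length_map] at hlen hTlen
    omega
  refine ⟨.node (.out d) Ts, by rw [RTree.map_node]; rfl, ?_⟩
  refine SemOI.out hlu ?_
  intro i
  have := hTs i.1 (lt_of_lt_of_eq i.2 hlu.symm)
  simp only [List.get_eq_getElem, Fin.coe_cast]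
  exact this i.2

private theorem bwd_prem3 : ∀ {q' : Q ⊕ Bool} {σ : Γ} {ss : List (RTree Γ)}
    {us' : List (ST Γ (Γ ⊕ Δ ⊕ Unit) (Q ⊕ Bool))} {r' : Rhs (Γ ⊕ Δ ⊕ Unit) (Q ⊕ Bool)}
    {t₀' t' : OT (Γ ⊕ Δ ⊕ Unit)} (hr : r' ∈ M.pair.sel q' σ ss)
    (h₀ : SemOI M.pair.sel (substX ss r') t₀') (hs : OISub M.pair.sel us' t₀' t'),
    BwdMot1 M (substX ss r') t₀' h₀ → BwdMot2 M us' t₀' t' hs →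
    BwdMot1 M (.node (.call q' (.node σ ss)) us') t' (SemOI.call hr h₀ hs) := by
  intro q' σ ss us' r' t₀' t' hr h₀ hs ih₀ ihs u hu
  obtain ⟨l, us, rfl, hl, rfl⟩ := map_eq_node hu.symm
  obtain ⟨q, rfl, rfl⟩ := slab'_eq_call hl.symm
  rw [pair_sel_inl] at hr
  obtain ⟨r, hr, rfl⟩ := hr
  obtain ⟨t₀, rfl, h₀'⟩ := ih₀ (substX ss r) (substX_rlab ss r)
  obtain ⟨t, rfl, hsub⟩ := ihs us t₀ rfl rfl
  exact ⟨t, rfl, SemOI.call hr h₀' hsub⟩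

private theorem bwd_prem4 : ∀ {us' : List (ST Γ (Γ ⊕ Δ ⊕ Unit) (Q ⊕ Bool))} {i : ℕ}
    {t' : OT (Γ ⊕ Δ ⊕ Unit)} (hlt : i < us'.length)
    (hsem : SemOI M.pair.sel (us'.get ⟨i, hlt⟩) t'),
    BwdMot1 M (us'.get ⟨i, hlt⟩) t' hsem →
    BwdMot2 M us' (.node (.param i) []) t' (OISub.param hlt hsem) := by
  intro us' i t' hlt hsem ih us t₀ hus ht₀
  obtain ⟨l, ts0, rfl, hl, hts0⟩ := map_eq_node ht₀.symm
  obtain rfl := olab'_eq_param hl.symm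
  obtain rfl : ts0 = [] := by simpa using hts0.symm
  subst hus
  have hlt' : i < us.length := by simpa using hlt
  obtain ⟨t, rfl, hsem'⟩ := ih (us.get ⟨i, hlt'⟩)
    (by simp only [List.get_eq_getElem, List.getElem_map])
  exact ⟨t, rfl, OISub.param hlt' hsem'⟩

set_option maxHeartbeats 800000 in
private theorem bwd_prem5 : ∀ {us' : List (ST Γ (Γ ⊕ Δ ⊕ Unit) (Q ⊕ Bool))}
    {d : Γ ⊕ Δ ⊕ Unit} {ts ts' : List (OT (Γ ⊕ Δ ⊕ Unit))}
    (hlen : ts'.length = ts.length)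
    (hsub : ∀ i : Fin ts.length, OISub M.pair.sel us' (ts.get i)
      (ts'.get (Fin.cast hlen.symm i))),
    (∀ i : Fin ts.length, BwdMot2 M us' (ts.get i) (ts'.get (Fin.cast hlen.symm i))
      (hsub i)) →
    BwdMot2 M us' (.node (.out d) ts) (.node (.out d) ts') (OISub.out hlen hsub) := by
  intro us' d' ts ts' hlen hsub ih us t₀ hus ht₀
  obtain ⟨l, Ts0, rfl, hl, rfl⟩ := map_eq_node ht₀.symm
  obtain ⟨d, rfl, rfl⟩ := olab'_eq_out hl.symm
  have hP : ∀ (i : ℕ) (hi : i < ts'.length), ∃ t, ts'[i] = t.map olab' ∧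
      (∀ hj : i < Ts0.length, OISub M.sel us Ts0[i] t) := by
    intro i hi
    have hi' : i < Ts0.length := by
      simp only [List.length_map] at hlen
      omega
    have := ih (Fin.cast (by simp) ⟨i, hi'⟩)
    simp only [BwdMot2, List.get_eq_getElem, List.getElem_map, Fin.coe_cast] at this
    obtain ⟨t, ht, hs⟩ := this us _ hus rfl
    exact ⟨t, ht, fun _ => hs⟩
  obtain ⟨Ts, rfl, hTlen, hTs⟩ := list_unmap _ (RTree.map ounlab') unmap_mapO ts' _ hP
  have hlu : Ts.length = Ts0.length := by
    simp only [List.length_map] at hlen hTlen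
    omega
  refine ⟨.node (.out d) Ts, by rw [RTree.map_node]; rfl, ?_⟩
  refine OISub.out hlu ?_
  intro i
  have := hTs i.1 (lt_of_lt_of_eq i.2 hlu.symm)
  simp only [List.get_eq_getElem, Fin.coe_cast]
  exact this i.2

theorem sem_relabel_bwd {u : ST Γ Δ Q} {t' : OT (Γ ⊕ Δ ⊕ Unit)}
    (h : SemOI M.pair.sel (u.map slab') t') :
    ∃ t, t' = t.map olab' ∧ SemOI M.sel u t := by
  exact SemOI.rec (motive_1 := BwdMot1 M) (motive_2 := BwdMot2 M)
    bwd_prem1 bwd_prem2 bwd_prem3 bwd_prem4 bwd_prem5 h u rfl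

theorem oisub_relabel_bwd {us : List (ST Γ Δ Q)} {t₀ : OT Δ}
    {t' : OT (Γ ⊕ Δ ⊕ Unit)}
    (h : OISub M.pair.sel (us.map (RTree.map slab')) (t₀.map olab') t') :
    ∃ t, t' = t.map olab' ∧ OISub M.sel us t₀ t := by
  exact OISub.rec (motive_1 := BwdMot1 M) (motive_2 := BwdMot2 M)
    bwd_prem1 bwd_prem2 bwd_prem3 bwd_prem4 bwd_prem5 h us t₀ rfl rfl

end Bwd2

theorem embed_injective : Function.Injective (embed (Δ := Δ)) :=
  RTree.map_injective (fun _ _ h => by injection h)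

theorem embed_eq_mapO_list : ∀ (ws : List (RTree (Γ ⊕ Δ ⊕ Unit))),
    (∀ w ∈ ws, ∀ v : OT Δ, embed w = v.map olab' →
      ∃ t : RTree Δ, v = embed t ∧ w = t.map (fun d => Sum.inr (Sum.inl d))) →
    ∀ vs : List (OT Δ), ws.map embed = vs.map (RTree.map olab') →
      ∃ ts : List (RTree Δ), vs = ts.map embed ∧
        ws = ts.map (RTree.map (fun d => Sum.inr (Sum.inl d))) := by
  intro ws
  induction ws with
  | nil =>
    intro _ vs hvs
    cases vs with
    | nil => exact ⟨[], rfl, rfl⟩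
    | cons => simp at hvs
  | cons x xs ihl =>
    intro ih vs hvs
    cases vs with
    | nil => simp at hvs
    | cons y ys =>
      simp only [List.map_cons, List.cons.injEq] at hvs
      obtain ⟨t1, rfl, rfl⟩ := ih x (List.mem_cons_self ..) y hvs.1
      obtain ⟨ts, rfl, rfl⟩ := ihl (fun u hu => ih u (List.mem_cons_of_mem _ hu)) ys hvs.2
      exact ⟨t1 :: ts, rfl, rfl⟩

theorem embed_eq_mapO : ∀ (w : RTree (Γ ⊕ Δ ⊕ Unit)) (v : OT Δ),
    embed w = v.map olab' →
    ∃ t : RTree Δ, v = embed t ∧ w = t.map (fun d => Sum.inr (Sum.inl d)) := by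
  apply RTree.strongInd
  intro a ws ih v hv
  rw [embed_node] at hv
  obtain ⟨l, vs, rfl, hl, hvs⟩ := map_eq_node hv.symm
  obtain ⟨d, rfl, rfl⟩ := olab'_eq_out hl.symm
  obtain ⟨ts, rfl, rfl⟩ := embed_eq_mapO_list ws ih vs hvs
  exact ⟨.node d ts, by rw [embed_node], by rw [RTree.map_node]⟩

theorem pair_correct_fwd (M : MTT Γ Δ Q) {s : RTree Γ} {t : RTree Δ}
    (h : (s, t) ∈ tauOI M.rankΓ M.rankΔ M.sel M.q₀) :
    (s, RTree.node (Sum.inr (Sum.inr ()))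
        [s.map Sum.inl, t.map (fun d => Sum.inr (Sum.inl d))]) ∈
      tauOI M.pair.rankΓ M.pair.rankΔ M.pair.sel M.pair.q₀ := by
  obtain ⟨hs, ht, hsem⟩ := h
  refine ⟨hs, ?_, ?_⟩
  · refine RTree.Wf.node (by rfl) ?_
    intro u hu
    simp only [List.mem_cons, List.not_mem_nil, or_false] at hu
    rcases hu with rfl | rfl
    · exact RTree.wf_map (fun _ => rfl) hs
    · exact RTree.wf_map (fun _ => rfl) ht
  · obtain ⟨σ, ss⟩ := s
    cases hs with
    | node hlen hts =>
    cases hsem with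
    | @call q' σ' ss' us r t₀ tt hr h₀ hsub =>
      refine SemOI.call
        (r := .node (.out (Sum.inr (Sum.inr ()))) [copyRhs Δ Q σ (M.rankΓ σ), r.map rlab'])
        (t₀ := .node (.out (Sum.inr (Sum.inr ())))
          [.node (.out (Sum.inl σ)) (ss.map fun x => embed (x.map Sum.inl)), t₀.map olab'])
        ?_ ?_ ?_
      · show _ ∈ M.pair.sel (Sum.inr false) σ ss
        rw [pair_sel_init]
        exact ⟨r, hr, rfl⟩
      · rw [substX_node]
        simp only [List.map_cons, List.map_nil]
        refine SemOI.out
          (ts := [.node (.out (Sum.inl σ)) (ss.map fun x => embed (x.map Sum.inl)),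
                  t₀.map olab']) ?_ ?_
        case _ => rfl
        intro i
        match i with
        | ⟨0, _⟩ =>
          exact (sem_copy_subst M hlen hts (fun x hx _ => sem_copy M (hts x hx) _) _).2 rfl
        | ⟨1, _⟩ =>
          show SemOI M.pair.sel (substX ss (r.map rlab')) (t₀.map olab')
          rw [substX_rlab]
          exact sem_relabel_fwd M h₀
      · rw [embed_node]
        simp only [List.map_cons, List.map_nil]
        refine OISub.out (hlen := rfl) ?_
        intro i
        match i with
        | ⟨0, _⟩ =>
          show OISub M.pair.sel []
            (RTree.node (.out (Sum.inl σ)) (ss.map fun x => embed (x.map Sum.inl)))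
            (embed ((RTree.node σ ss).map Sum.inl))
          rw [embed_map_inl]
          refine oisub_of_isOut _ _ (IsOut.node ?_)
          intro u hu
          obtain ⟨v, hv, rfl⟩ := List.mem_map.1 hu
          exact isOut_embed _
        | ⟨1, _⟩ =>
          show OISub M.pair.sel [] (t₀.map olab')
            (embed (t.map (fun d => Sum.inr (Sum.inl d))))
          rw [← embed_olab]
          exact oisub_relabel_fwd M hsub

theorem pair_correct_bwd (M : MTT Γ Δ Q) {s : RTree Γ} {w : RTree (Γ ⊕ Δ ⊕ Unit)}
    (h : (s, w) ∈ tauOI M.pair.rankΓ M.pair.rankΔ M.pair.sel M.pair.q₀) :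
    ∃ t : RTree Δ, (s, t) ∈ tauOI M.rankΓ M.rankΔ M.sel M.q₀ ∧
      w = .node (Sum.inr (Sum.inr ()))
        [s.map Sum.inl, t.map (fun d => Sum.inr (Sum.inl d))] := by
  obtain ⟨hs, hw, hsem⟩ := h
  obtain ⟨σ, ss⟩ := s
  have hwfs := hs
  cases hwfs with
  | node hlen hts =>
  cases hsem with
  | @call q' σ' ss' us r' t₀' tt hr h₀ hsub =>
    replace hr : r' ∈ M.pair.sel (Sum.inr false) σ ss := hr
    rw [pair_sel_init] at hr
    obtain ⟨r, hr, rfl⟩ := hr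
    rw [substX_node] at h₀
    simp only [List.map_cons, List.map_nil] at h₀
    cases h₀ with
    | @out d us2 ts hlen2 hsem2 =>
      obtain ⟨a, b, rfl⟩ := List.length_eq_two.1 (by simpa using hlen2)
      have ha := hsem2 ⟨0, by simp⟩
      have hb := hsem2 ⟨1, by simp⟩
      simp only [List.get_eq_getElem, List.getElem_cons_zero, List.getElem_cons_succ,
        Fin.coe_cast] at ha hb
      have ha' := (sem_copy_subst M hlen hts (fun x hx _ => sem_copy M (hts x hx) _) a).1 ha
      subst ha'
      rw [substX_rlab] at hb
      obtain ⟨tb, rfl, hb'⟩ := sem_relabel_bwd hb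
      generalize hE : embed w = E at hsub
      cases hsub with
      | @out us3 d3 ts3 ts3' hlen3 hsub3 =>
        obtain ⟨a', b', rfl⟩ := List.length_eq_two.1 (by simpa using hlen3)
        have hsA := hsub3 ⟨0, by simp⟩
        have hsB := hsub3 ⟨1, by simp⟩
        simp only [List.get_eq_getElem, List.getElem_cons_zero, List.getElem_cons_succ,
          Fin.coe_cast] at hsA hsB
        have hA := eq_of_oisub_isOut hsA (IsOut.node (by
          intro u hu
          obtain ⟨v, hv, rfl⟩ := List.mem_map.1 hu
          exact isOut_embed _))
        obtain ⟨tb', rfl, hsB'⟩ := oisub_relabel_bwd (us := []) (t₀ := tb) hsB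
        subst hA
        obtain ⟨c, ws, rfl, hc, hws⟩ := map_eq_node hE
        injection hc with hc'
        subst hc'
        obtain ⟨w1, w2, rfl⟩ := List.length_eq_two.1 (by
          simpa using (congrArg List.length hws).symm)
        simp only [List.map_cons, List.map_nil, List.cons.injEq, and_true] at hws
        obtain ⟨hw1, hw2⟩ := hws
        have hw1' : w1 = (RTree.node σ ss).map Sum.inl := by
          apply embed_injective
          rw [embed_map_inl]
          exact hw1.symm
        subst hw1'
        obtain ⟨t, rfl, rfl⟩ := embed_eq_mapO w2 tb' hw2.symm
        refine ⟨t, ⟨hs, ?_, ?_⟩, rfl⟩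
        · cases hw with
          | node hlW hWs =>
            refine RTree.wf_of_map (rk' := M.pair.rankΔ)
              (f := fun d => Sum.inr (Sum.inl d)) (fun _ => rfl) ?_
            exact hWs _ (by simp)
        · exact SemOI.call hr hb' hsB'

end Pairing

/-- Let `M = (Q,Σ,Δ,q0,R)` be an mtt with `Σ` and `Δ` disjoint, and
let `π` be a binary symbol not in `Σ ∪ Δ` (here the combined output alphabet is
the disjoint sum `Σ ⊕ Δ ⊕ {π}`, so disjointness is automatic).  Then there
exists an mtt `M'` with input alphabet `Σ` and output alphabet `Σ ∪ Δ ∪ {π}`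
such that `τ_{OI,M'} = {(s, π(s,t)) | (s,t) ∈ τ_{OI,M}}`.  Consequently, for all
`s ∈ T_Σ` and `t ∈ T_Δ`: `(s,t) ∈ τ_{OI,M}` iff `π(s,t) ∈ range(τ_{OI,M'})`. -/
theorem exists_mtt_pairing_input_with_output {Γ Δ Q : Type}
    [Fintype Γ] [Fintype Δ] [Fintype Q] (M : MTT Γ Δ Q) :
    ∃ (Q' : Type) (_ : Fintype Q') (M' : MTT Γ (Γ ⊕ Δ ⊕ Unit) Q'),
      M'.rankΓ = M.rankΓ ∧
      M'.rankΔ = Sum.elim M.rankΓ (Sum.elim M.rankΔ (fun _ => 2)) ∧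
      tauOI M'.rankΓ M'.rankΔ M'.sel M'.q₀ =
        {p | ∃ s t, (s, t) ∈ tauOI M.rankΓ M.rankΔ M.sel M.q₀ ∧
          p = (s, .node (Sum.inr (Sum.inr ()))
                  [s.map Sum.inl, t.map (fun d => Sum.inr (Sum.inl d))])} ∧
      ∀ (s : RTree Γ) (t : RTree Δ),
        ((s, t) ∈ tauOI M.rankΓ M.rankΔ M.sel M.q₀ ↔
          (RTree.node (Sum.inr (Sum.inr ()))
              [s.map Sum.inl, t.map (fun d => Sum.inr (Sum.inl d))]) ∈
            Prod.snd '' (tauOI M'.rankΓ M'.rankΔ M'.sel M'.q₀)) := by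
  have hset : tauOI M.pair.rankΓ M.pair.rankΔ M.pair.sel M.pair.q₀ =
      {p | ∃ s t, (s, t) ∈ tauOI M.rankΓ M.rankΔ M.sel M.q₀ ∧
        p = (s, .node (Sum.inr (Sum.inr ()))
          [s.map Sum.inl, t.map (fun d => Sum.inr (Sum.inl d))])} := by
    ext ⟨s, w⟩
    simp only [Set.mem_setOf_eq]
    constructor
    · intro h
      obtain ⟨t, ht, rfl⟩ := pair_correct_bwd M h
      exact ⟨s, t, ht, rfl⟩
    · rintro ⟨s', t, ht, heq⟩
      injection heq with h1 h2
      subst h1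
      subst h2
      exact pair_correct_fwd M ht
  refine ⟨Q ⊕ Bool, inferInstance, M.pair, rfl, rfl, hset, ?_⟩
  intro s t
  constructor
  · intro h
    exact ⟨(s, RTree.node (Sum.inr (Sum.inr ()))
        [s.map Sum.inl, t.map (fun d => Sum.inr (Sum.inl d))]),
      by rw [hset]; exact ⟨s, t, h, rfl⟩, rfl⟩
  · rintro ⟨⟨s₀, w⟩, hmem, hw⟩
    rw [hset] at hmem
    obtain ⟨s₁, t₁, ht, heq⟩ := hmem
    injection heq with h1 h2
    subst h1
    dsimp only at hw
    subst h2
    injection hw with hl hkids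
    simp only [List.cons.injEq, and_true] at hkids
    obtain ⟨hk1, hk2⟩ := hkids
    obtain rfl : s₀ = s := RTree.map_injective Sum.inl_injective hk1
    obtain rfl : t₁ = t := RTree.map_injective (fun a b hab => by simpa using hab) hk2
    exact ht

end MttF
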